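/- (Exponential solution of the commutative Master Equation.) Assume additionally that g is continuous, and define Γ(t) = ∫_0^t g(s)² ds and ℋ_t = c t H + Γ(t) δH. Then the family Λ_t := exp( −i[ℋ_t, ·] + Γ(t) D ), where exp is the exponential in the Banach algebra of linear maps on M_d(ℂ), satisfies Λ_0 = id and dΛ_t/dt = L_t ∘ Λ_t for every t ∈ ℝ. -/

import Mathlib

open Matrix
open NormedSpace

noncomputable section

attribute [local instance] Matrix.normedAddCommGroup Matrix.normedSpace

/-- Port helper: the matrix topology, read off the norm above (the same product topology). -/
abbrev matrixNormTopology {n : Type*} [Fintype n] : TopologicalSpace (Matrix n n ℂ) :=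
  (Matrix.normedAddCommGroup : NormedAddCommGroup (Matrix n n ℂ)).toSeminormedAddCommGroup.toPseudoMetricSpace.toUniformSpace.toTopologicalSpace

attribute [local instance] matrixNormTopology

/-- The commutator derivation `ρ ↦ −i[B, ρ]`, as a continuous linear map. -/
def adL {n : Type*} [Fintype n] [DecidableEq n] (B : Matrix n n ℂ) :
    Matrix n n ℂ →L[ℂ] Matrix n n ℂ :=
  LinearMap.toContinuousLinearMap
    ((-Complex.I) • (LinearMap.mulLeft ℂ B - LinearMap.mulRight ℂ B))

lemma adL_apply {n : Type*} [Fintype n] [DecidableEq n] (B ρ : Matrix n n ℂ) :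
    adL B ρ = (-Complex.I) • (B * ρ - ρ * B) := by
  simp [adL, LinearMap.mulLeft_apply, LinearMap.mulRight_apply]

lemma commMN {d : ℕ} (H δH : Matrix (Fin d) (Fin d) ℂ)
    (hcomm : δH * H = H * δH)
    (D : Matrix (Fin d) (Fin d) ℂ →L[ℂ] Matrix (Fin d) (Fin d) ℂ)
    (hD : ∀ ρ, D (H * ρ - ρ * H) = H * D ρ - D ρ * H) :
    Commute (adL H) (adL δH + D) := by
  refine ContinuousLinearMap.ext fun ρ => ?_
  have hDc : adL H (D ρ) = D (adL H ρ) := by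
    rw [adL_apply, adL_apply, _root_.map_smul, hD]
  simp only [ContinuousLinearMap.mul_apply, ContinuousLinearMap.add_apply, map_add]
  rw [hDc]
  congr 1
  have key : H * (δH * ρ - ρ * δH) - (δH * ρ - ρ * δH) * H
      = δH * (H * ρ - ρ * H) - (H * ρ - ρ * H) * δH := by
    have e1 : H * (δH * ρ) = δH * (H * ρ) := by rw [← mul_assoc, ← hcomm, mul_assoc]
    have e2 : ρ * δH * H = ρ * H * δH := by rw [mul_assoc, hcomm, mul_assoc]
    simp only [mul_sub, sub_mul, e1]
    rw [e2, ← mul_assoc H ρ δH, mul_assoc δH ρ H]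
    abel
  rw [adL_apply, adL_apply, adL_apply, adL_apply,
    mul_smul_comm, mul_smul_comm, smul_mul_assoc, smul_mul_assoc, ← smul_sub, ← smul_sub, key]

set_option maxHeartbeats 2000000 in
set_option synthInstance.maxHeartbeats 1000000 in
/-- exponential solution of the commutative Master Equation:
with `Γ(t) = ∫_0^t g(s)² ds` and `ℋ_t = ctH + Γ(t)δH`, the family
`Λ_t = exp(−i[ℋ_t,·] + Γ(t)D)` satisfies `Λ_0 = id` and `dΛ_t/dt = L_t ∘ Λ_t`. -/
theorem stmt16 {d : ℕ}
    (H δH : Matrix (Fin d) (Fin d) ℂ) (hH : Hᴴ = H) (hδH : δHᴴ = δH)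
    (hcomm : δH * H = H * δH)
    (D : Matrix (Fin d) (Fin d) ℂ →L[ℂ] Matrix (Fin d) (Fin d) ℂ)
    (hD : ∀ ρ, D (H * ρ - ρ * H) = H * D ρ - D ρ * H)
    (c : ℝ) (g : ℝ → ℝ) (hg : Continuous g)
    (Γ : ℝ → ℝ) (hΓ : ∀ t, Γ t = ∫ s in (0:ℝ)..t, (g s) ^ 2)
    (L : ℝ → (Matrix (Fin d) (Fin d) ℂ →L[ℂ] Matrix (Fin d) (Fin d) ℂ))
    (hL : ∀ t, L t = adL ((c : ℂ) • H + ((g t : ℂ)) ^ 2 • δH) + ((g t : ℂ)) ^ 2 • D)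
    (Λ : ℝ → (Matrix (Fin d) (Fin d) ℂ →L[ℂ] Matrix (Fin d) (Fin d) ℂ))
    (hΛ : ∀ t, Λ t = NormedSpace.exp
      (adL (((c * t : ℝ) : ℂ) • H + ((Γ t : ℝ) : ℂ) • δH) + ((Γ t : ℝ) : ℂ) • D)) :
    Λ 0 = 1 ∧ ∀ t : ℝ, HasDerivAt Λ ((L t).comp (Λ t)) t := by
  letI : NormedAlgebra ℚ (Matrix (Fin d) (Fin d) ℂ →L[ℂ] Matrix (Fin d) (Fin d) ℂ) :=
    NormedAlgebra.restrictScalars ℚ ℂ _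
  set M := adL H with hM
  set N := adL δH + D with hN
  have cMN : Commute M N := commMN H δH hcomm D hD
  -- pointwise version of commutation
  have pt : ∀ (P Q : Matrix (Fin d) (Fin d) ℂ →L[ℂ] Matrix (Fin d) (Fin d) ℂ),
      Commute P Q → ∀ x, P (Q x) = Q (P x) := by
    intro P Q h x
    have := ContinuousLinearMap.ext_iff.1 h.eq x
    simpa [ContinuousLinearMap.mul_apply] using this
  -- commutation survives complex scalar multiples (done by hand to dodge instance issues)
  have hsr : ∀ (a : ℂ) (P Q : Matrix (Fin d) (Fin d) ℂ →L[ℂ] Matrix (Fin d) (Fin d) ℂ),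
      Commute P Q → Commute P (a • Q) := by
    intro a P Q h
    refine ContinuousLinearMap.ext fun x => ?_
    simp only [ContinuousLinearMap.mul_apply, ContinuousLinearMap.smul_apply, _root_.map_smul]
    rw [pt P Q h]
  have hsl : ∀ (a : ℂ) (P Q : Matrix (Fin d) (Fin d) ℂ →L[ℂ] Matrix (Fin d) (Fin d) ℂ),
      Commute P Q → Commute (a • P) Q := by
    intro a P Q h
    refine ContinuousLinearMap.ext fun x => ?_
    simp only [ContinuousLinearMap.mul_apply, ContinuousLinearMap.smul_apply, _root_.map_smul]
    rw [pt P Q h]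
  have hΛ' : ∀ t, Λ t = exp (((c * t : ℝ) : ℂ) • M) * exp (((Γ t : ℝ) : ℂ) • N) := by
    intro t
    rw [hΛ t]
    have harg : adL (((c * t : ℝ) : ℂ) • H + ((Γ t : ℝ) : ℂ) • δH) + ((Γ t : ℝ) : ℂ) • D
        = ((c * t : ℝ) : ℂ) • M + ((Γ t : ℝ) : ℂ) • N := by
      refine ContinuousLinearMap.ext fun ρ => ?_
      simp only [ContinuousLinearMap.add_apply, ContinuousLinearMap.smul_apply, adL_apply,
        hM, hN, add_mul, mul_add, smul_mul_assoc, mul_smul_comm]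
      module
    rw [harg, NormedSpace.exp_add_of_commute (hsl _ _ _ (hsr _ _ _ cMN))]
  have hΓ' : ∀ t, HasDerivAt Γ (g t ^ 2) t := by
    intro t
    have hfe : Γ = fun u => ∫ s in (0:ℝ)..u, (g s) ^ 2 := funext hΓ
    rw [hfe]
    exact intervalIntegral.integral_hasDerivAt_right
      ((hg.pow 2).intervalIntegrable _ _)
      ((hg.pow 2).stronglyMeasurableAtFilter _ _)
      (hg.pow 2).continuousAt
  have hΓ0 : Γ 0 = 0 := by rw [hΓ]; simp
  constructor
  · rw [hΛ 0]
    have h0 : adL (((c * 0 : ℝ) : ℂ) • H + ((Γ 0 : ℝ) : ℂ) • δH) + ((Γ 0 : ℝ) : ℂ) • D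
        = 0 := by
      refine ContinuousLinearMap.ext fun ρ => ?_
      simp [adL_apply, hΓ0]
    rw [h0, exp_zero]
  · intro t
    have hu1 : HasDerivAt (fun u : ℝ => ((c * u : ℝ) : ℂ)) ((c : ℂ)) t := by
      simpa using ((hasDerivAt_id t).const_mul c).ofReal_comp
    have hu2 : HasDerivAt (fun u : ℝ => ((Γ u : ℝ) : ℂ)) (((g t ^ 2 : ℝ) : ℂ)) t :=
      (hΓ' t).ofReal_comp
    have h1 : HasDerivAt (fun u : ℝ => exp (((c * u : ℝ) : ℂ) • M))
        ((c : ℂ) • (exp (((c * t : ℝ) : ℂ) • M) * M)) t :=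
      by
        have e := (hasDerivAt_exp_smul_const (𝕂 := ℂ) M (((c * t : ℝ) : ℂ))).scomp t hu1
        exact e
    have h2 : HasDerivAt (fun u : ℝ => exp (((Γ u : ℝ) : ℂ) • N))
        (((g t ^ 2 : ℝ) : ℂ) • (exp (((Γ t : ℝ) : ℂ) • N) * N)) t :=
      by
        have e := (hasDerivAt_exp_smul_const (𝕂 := ℂ) N (((Γ t : ℝ) : ℂ))).scomp t hu2
        exact e
    have hmul := h1.mul h2
    have hΛfun : Λ = fun u => exp (((c * u : ℝ) : ℂ) • M) * exp (((Γ u : ℝ) : ℂ) • N) :=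
      funext hΛ'
    rw [Pi.mul_def, ← hΛfun] at hmul
    set E1 := exp (((c * t : ℝ) : ℂ) • M) with hE1
    set E2 := exp (((Γ t : ℝ) : ℂ) • N) with hE2
    have hME1 : Commute M E1 := (hsr _ _ _ (Commute.refl M)).exp_right
    have hNE1 : Commute N E1 := (hsr _ _ _ cMN.symm).exp_right
    have hNE2 : Commute N E2 := (hsr _ _ _ (Commute.refl N)).exp_right
    have hgoal : (L t).comp (Λ t)
        = (c : ℂ) • (E1 * M) * E2 + E1 * (((g t ^ 2 : ℝ) : ℂ) • (E2 * N)) := by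
      refine ContinuousLinearMap.ext fun ρ => ?_
      have hLHS : (L t).comp (Λ t) ρ = L t (E1 (E2 ρ)) := by
        rw [ContinuousLinearMap.comp_apply, hΛ' t, ← hE1, ← hE2,
          ContinuousLinearMap.mul_apply]
      rw [hLHS, hL t]
      have hb : ((g t ^ 2 : ℝ) : ℂ) = ((g t : ℝ) : ℂ) ^ 2 := by push_cast; ring
      simp only [ContinuousLinearMap.add_apply, ContinuousLinearMap.smul_apply,
        ContinuousLinearMap.mul_apply, _root_.map_smul, adL_apply, hb]
      rw [← pt M E1 hME1, ← pt N E2 hNE2, ← pt N E1 hNE1]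
      simp only [hM, hN, ContinuousLinearMap.add_apply, adL_apply, add_mul, mul_add,
        smul_add, smul_mul_assoc, mul_smul_comm]
      module
    rw [hgoal]
    exact hmul
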